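/- Let R be a commutative ring of characteristic p > 0 with a Hasse–Schmidt derivation ∂. Then for every x ∈ R and every n ∈ ℕ: if p divides n, then ∂ₙ(xᵖ) = (∂_{n/p}(x))ᵖ, and if p does not divide n, then ∂ₙ(xᵖ) = 0. -/

import Mathlib

/-- Key lemma: coefficient of `φ ^ p` in characteristic `p`. -/
theorem powerSeries_coeff_pow_char {R : Type} [CommRing R] (p : ℕ)
    [Fact p.Prime] [CharP R p] (φ : PowerSeries R) (n : ℕ) :
    PowerSeries.coeff n (φ ^ p) =
      if p ∣ n then (PowerSeries.coeff (n / p) φ) ^ p else 0 := by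
  have hp : 0 < p := (Fact.out : p.Prime).pos
  set g : Polynomial R := φ.trunc (n + 1) with hg
  -- X^(n+1) divides φ - g
  have hdvd : (PowerSeries.X : PowerSeries R) ^ (n + 1) ∣ (φ - (g : PowerSeries R)) := by
    rw [PowerSeries.X_pow_dvd_iff]
    intro m hm
    rw [map_sub, Polynomial.coeff_coe, hg, PowerSeries.coeff_trunc, if_pos hm, sub_self]
  have hdvd2 : (PowerSeries.X : PowerSeries R) ^ (n + 1) ∣ (φ ^ p - (g : PowerSeries R) ^ p) :=
    hdvd.trans (sub_dvd_pow_sub_pow _ _ p)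
  have hcoeff : PowerSeries.coeff n (φ ^ p) = PowerSeries.coeff n ((g : PowerSeries R) ^ p) := by
    have := PowerSeries.X_pow_dvd_iff.mp hdvd2 n (Nat.lt_succ_self n)
    rw [map_sub, sub_eq_zero] at this
    exact this
  have hexp : (g : PowerSeries R) ^ p = ((g ^ p : Polynomial R) : PowerSeries R) := by
    push_cast; ring
  rw [hcoeff, hexp, Polynomial.coeff_coe, ← Polynomial.map_frobenius_expand,
    Polynomial.coeff_map, Polynomial.coeff_expand hp]
  split_ifs with h
  · rw [frobenius_def, hg, ← Polynomial.coeff_coe,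
      PowerSeries.coeff_coe_trunc_of_lt (Nat.lt_succ_of_le (Nat.div_le_self n p))]
  · rw [map_zero]

/-- For a Hasse–Schmidt derivation on a commutative ring of characteristic `p > 0`:
`∂ₙ(xᵖ) = (∂_{n/p}(x))ᵖ` if `p ∣ n`, and `∂ₙ(xᵖ) = 0` otherwise. -/
theorem hasseSchmidt_frobenius (R : Type) [CommRing R] (p : ℕ)
    [Fact p.Prime] [CharP R p] (d : ℕ → R → R)
    (f : R →+* PowerSeries R) (hf : ∀ a, f a = PowerSeries.mk fun i => d i a)
    (h0 : ∀ x, d 0 x = x) :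
    ∀ (x : R) (n : ℕ),
      (p ∣ n → d n (x ^ p) = (d (n / p) x) ^ p) ∧ (¬ p ∣ n → d n (x ^ p) = 0) := by
  intro x n
  have key : d n (x ^ p) =
      if p ∣ n then (d (n / p) x) ^ p else 0 := by
    have h1 : d n (x ^ p) = PowerSeries.coeff n (f (x ^ p)) := by
      rw [hf, PowerSeries.coeff_mk]
    rw [h1, map_pow, powerSeries_coeff_pow_char p (f x) n, hf, PowerSeries.coeff_mk]
  constructor
  · intro h; rw [key, if_pos h]
  · intro h; rw [key, if_neg h]
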